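/- In a k-uniform 2-hypertree, any two distinct maximal tight stars are edge-disjoint. -/

import Mathlib

variable {V : Type*} [DecidableEq V]

/-- The list of consecutive `k`-windows (as finsets) of a vertex sequence. -/
def windows (k : ℕ) (w : List V) : List (Finset V) :=
  (List.range (w.length + 1 - k)).map fun i => ((w.drop i).take k).toFinset

/-- `w` is the vertex sequence of a chain: `v₁ ≠ v_l`, each window is a `k`-set,
and the `l - k + 1` window edges are pairwise distinct. -/
def IsChainSeq (k : ℕ) (w : List V) : Prop :=
  k ≤ w.length ∧ w.head? ≠ w.getLast? ∧
  (∀ e ∈ windows k w, e.card = k) ∧ (windows k w).Nodup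

/-- `w` is the vertex sequence of a semicycle: `v₁ = v_l`, each window is a `k`-set,
and the `l - k + 1` window edges are pairwise distinct. -/
def IsSemicycleSeq (k : ℕ) (w : List V) : Prop :=
  k ≤ w.length ∧ w.head? = w.getLast? ∧
  (∀ e ∈ windows k w, e.card = k) ∧ (windows k w).Nodup

/-- A hypergraph with edge set `E` contains no semicycle as a subhypergraph. -/
def SemicycleFree (k : ℕ) (E : Finset (Finset V)) : Prop :=
  ¬ ∃ w : List V, IsSemicycleSeq k w ∧ ∀ e ∈ windows k w, e ∈ E

/-- Every two distinct vertices of `S` lie in a common chain subhypergraph of `E`. -/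
def ChainConnOn (k : ℕ) (S : Finset V) (E : Finset (Finset V)) : Prop :=
  ∀ u ∈ S, ∀ v ∈ S, u ≠ v →
    ∃ w : List V, IsChainSeq k w ∧ (∀ e ∈ windows k w, e ∈ E) ∧ u ∈ w ∧ v ∈ w

/-- Chain-connectedness on the whole (finite) vertex type. -/
def ChainConn [Fintype V] (k : ℕ) (E : Finset (Finset V)) : Prop :=
  ChainConnOn k Finset.univ E

/-- A `k`-uniform hypertree: chain-connected and semicycle-free. -/
def IsHypertree [Fintype V] (k : ℕ) (E : Finset (Finset V)) : Prop :=
  (∀ e ∈ E, e.card = k) ∧ ChainConn k E ∧ SemicycleFree k E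

/-- Every chain subhypergraph of `E` has length (number of edges) at most `l`. -/
def ChainsLenLE (k l : ℕ) (E : Finset (Finset V)) : Prop :=
  ∀ w : List V, IsChainSeq k w → (∀ e ∈ windows k w, e ∈ E) →
    w.length + 1 - k ≤ l

/-- An `l`-hypertree: a hypertree all of whose chains have length at most `l`. -/
def IsLHypertree [Fintype V] (k l : ℕ) (E : Finset (Finset V)) : Prop :=
  IsHypertree k E ∧ ChainsLenLE k l E

/-- Edge-minimal: deleting any edge destroys chain-connectedness. -/
def EdgeMinimal [Fintype V] (k : ℕ) (E : Finset (Finset V)) : Prop :=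
  ∀ e ∈ E, ¬ ChainConn k (E.erase e)

/-- Edge-maximal: adding any new `k`-set as an edge creates a semicycle. -/
def EdgeMaximal [Fintype V] (k : ℕ) (E : Finset (Finset V)) : Prop :=
  ∀ s : Finset V, s.card = k → s ∉ E → ¬ SemicycleFree k (insert s E)

/-- `S` is a (tight) star subhypergraph of `E`: a nonempty set of edges of `E`
all containing a common `(k-1)`-set kernel. -/
def IsStarSub (k : ℕ) (E S : Finset (Finset V)) : Prop :=
  S ⊆ E ∧ S.Nonempty ∧ ∃ K : Finset V, K.card = k - 1 ∧ ∀ e ∈ S, K ⊆ e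

/-- `S` is a maximal star subhypergraph of `E`. -/
def IsMaxStar (k : ℕ) (E S : Finset (Finset V)) : Prop :=
  IsStarSub k E S ∧ ∀ T, IsStarSub k E T → S ⊆ T → S = T

/-- Auxiliary: a `k`-set containing a `(k-1)`-set is that set plus one vertex. -/
lemma exists_insert_of_kernel {k : ℕ} (hk : 1 ≤ k) (K e : Finset V) (hK : K ⊆ e)
    (he : e.card = k) (hKc : K.card = k - 1) : ∃ x, x ∉ K ∧ e = insert x K := by
  have h : (e \ K).card = 1 := by rw [Finset.card_sdiff_of_subset hK]; omega
  obtain ⟨x, hx⟩ := Finset.card_eq_one.mp h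
  have hxm : x ∈ e \ K := hx ▸ Finset.mem_singleton_self x
  refine ⟨x, (Finset.mem_sdiff.mp hxm).2, ?_⟩
  rw [Finset.insert_eq, ← hx, Finset.sdiff_union_of_subset hK]

/-- in a `k`-uniform 2-hypertree, two distinct maximal tight stars
are edge-disjoint. -/
theorem stmt3 {V : Type*} [Fintype V] [DecidableEq V] (k : ℕ) (hk : 2 ≤ k)
    (E : Finset (Finset V)) (hH : IsLHypertree k 2 E)
    (S₁ S₂ : Finset (Finset V)) (h1 : IsMaxStar k E S₁) (h2 : IsMaxStar k E S₂)
    (hne : S₁ ≠ S₂) : Disjoint S₁ S₂ := by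
  obtain ⟨⟨hunif, _, hscf⟩, hlen⟩ := hH
  rw [Finset.disjoint_left]
  intro e heS1 heS2
  obtain ⟨hS1E, _, K₁, hK₁c, hK₁⟩ := h1.1
  obtain ⟨hS2E, _, K₂, hK₂c, hK₂⟩ := h2.1
  have hns12 : ¬ S₁ ⊆ S₂ := fun h => hne (h1.2 S₂ h2.1 h)
  have hns21 : ¬ S₂ ⊆ S₁ := fun h => hne ((h2.2 S₁ h1.1 h).symm)
  by_cases hKK : K₁ = K₂
  · -- same kernel: union is a star, contradicting maximality
    apply hns21
    have hstar : IsStarSub k E (S₁ ∪ S₂) :=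
      ⟨Finset.union_subset hS1E hS2E, ⟨e, Finset.mem_union_left _ heS1⟩,
        K₁, hK₁c, fun x hx => (Finset.mem_union.mp hx).elim (hK₁ x)
          (fun h => by rw [hKK]; exact hK₂ x h)⟩
    have heq := h1.2 _ hstar Finset.subset_union_left
    intro x hx
    rw [heq]
    exact Finset.mem_union_right _ hx
  · -- different kernels: build a forbidden chain/semicycle f, e, g
    obtain ⟨f, hfS1, hfS2⟩ := Finset.not_subset.mp hns12
    obtain ⟨g, hgS2, hgS1⟩ := Finset.not_subset.mp hns21
    obtain ⟨n, rfl⟩ : ∃ n, k = n + 2 := ⟨k - 2, by omega⟩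
    have hk1 : 1 ≤ n + 2 := by omega
    have hec : e.card = n + 2 := hunif e (hS1E heS1)
    have hfc : f.card = n + 2 := hunif f (hS1E hfS1)
    have hgc : g.card = n + 2 := hunif g (hS2E hgS2)
    have hfe : f ≠ e := fun h => hfS2 (h ▸ heS2)
    have hge : g ≠ e := fun h => hgS1 (h ▸ heS1)
    have hfg : f ≠ g := fun h => hfS2 (h ▸ hgS2)
    obtain ⟨c, hcK₁, hce⟩ := exists_insert_of_kernel hk1 K₁ e (hK₁ e heS1) hec hK₁c
    obtain ⟨b, hbK₂, hbe⟩ := exists_insert_of_kernel hk1 K₂ e (hK₂ e heS2) hec hK₂c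
    obtain ⟨a, haK₁, haf⟩ := exists_insert_of_kernel hk1 K₁ f (hK₁ f hfS1) hfc hK₁c
    obtain ⟨d, hdK₂, hdg⟩ := exists_insert_of_kernel hk1 K₂ g (hK₂ g hgS2) hgc hK₂c
    have hK₁e : K₁ = e.erase c := by rw [hce, Finset.erase_insert hcK₁]
    have hK₂e : K₂ = e.erase b := by rw [hbe, Finset.erase_insert hbK₂]
    have hbc : b ≠ c := by
      intro h; apply hKK; rw [hK₁e, hK₂e, h]
    have hbK₁ : b ∈ K₁ := by
      rw [hK₁e]; exact Finset.mem_erase.mpr ⟨hbc, hbe ▸ Finset.mem_insert_self b K₂⟩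
    have hcK₂ : c ∈ K₂ := by
      rw [hK₂e]
      exact Finset.mem_erase.mpr ⟨Ne.symm hbc, hce ▸ Finset.mem_insert_self c K₁⟩
    have hae : a ∉ e := by
      intro h
      rw [hce, Finset.mem_insert] at h
      rcases h with rfl | h
      · exact hfe (haf.trans hce.symm)
      · exact haK₁ h
    have hde : d ∉ e := by
      intro h
      rw [hbe, Finset.mem_insert] at h
      rcases h with rfl | h
      · exact hge (hdg.trans hbe.symm)
      · exact hdK₂ h
    have hK₂eq : K₂ = insert c (K₁.erase b) := by
      rw [hK₂e, hce, Finset.erase_insert_of_ne (Ne.symm hbc)]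
    -- the vertex sequence
    set L : List V := (K₁.erase b).toList with hLdef
    have hLfin : L.toFinset = K₁.erase b := Finset.toList_toFinset _
    have hLlen : L.length = n := by
      rw [hLdef, Finset.length_toList, Finset.card_erase_of_mem hbK₁, hK₁c]
      omega
    set w : List V := a :: b :: ((L ++ [c]) ++ [d]) with hwdef
    have hwlen : w.length = n + 4 := by
      simp [hwdef, hLlen]
    have hLc : (L ++ [c]).length = n + 1 := by simp [hLlen]
    -- compute the three windows
    have hW0 : ((w.drop 0).take (n + 2)).toFinset = f := by
      rw [hwdef]
      show ((a :: b :: ((L ++ [c]) ++ [d])).take (n + 2)).toFinset = f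
      rw [List.take_succ_cons, List.take_succ_cons, List.append_assoc, List.take_left' hLlen]
      simp only [List.toFinset_cons, hLfin]
      rw [Finset.insert_erase hbK₁, haf]
    have hW1 : ((w.drop 1).take (n + 2)).toFinset = e := by
      rw [hwdef]
      show ((b :: ((L ++ [c]) ++ [d])).take (n + 2)).toFinset = e
      rw [List.take_succ_cons, List.take_left' hLc]
      simp only [List.toFinset_cons, List.toFinset_append, hLfin, List.toFinset_cons,
        List.toFinset_nil, insert_empty_eq]
      rw [← Finset.insert_union, Finset.insert_erase hbK₁, Finset.union_comm,
        ← Finset.insert_eq, ← hce]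
    have hW2 : ((w.drop 2).take (n + 2)).toFinset = g := by
      rw [hwdef]
      show (((L ++ [c]) ++ [d]).take (n + 2)).toFinset = g
      rw [List.take_of_length_le (by simp [hLlen])]
      simp only [List.toFinset_append, hLfin, List.toFinset_cons, List.toFinset_nil,
        insert_empty_eq]
      rw [hdg, hK₂eq]
      ext x
      simp only [Finset.mem_union, Finset.mem_singleton, Finset.mem_insert]
      tauto
    have hwin : windows (n + 2) w = [f, e, g] := by
      have h3 : w.length + 1 - (n + 2) = 3 := by rw [hwlen]; omega
      rw [windows, h3]
      rw [show List.range 3 = [0, 1, 2] from rfl]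
      simp only [List.map_cons, List.map_nil]
      rw [hW0, hW1, hW2]
    have hcards : ∀ s ∈ windows (n + 2) w, s.card = n + 2 := by
      intro s hs
      rw [hwin] at hs
      simp only [List.mem_cons, List.not_mem_nil, or_false] at hs
      rcases hs with rfl | rfl | rfl
      · exact hfc
      · exact hec
      · exact hgc
    have hnd : (windows (n + 2) w).Nodup := by
      rw [hwin]
      simp [hfe, hfg, Ne.symm hge]
    have hedges : ∀ s ∈ windows (n + 2) w, s ∈ E := by
      intro s hs
      rw [hwin] at hs
      simp only [List.mem_cons, List.not_mem_nil, or_false] at hs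
      rcases hs with rfl | rfl | rfl
      · exact hS1E hfS1
      · exact hS1E heS1
      · exact hS2E hgS2
    have hklen : n + 2 ≤ w.length := by rw [hwlen]; omega
    have hhead : w.head? = some a := rfl
    have hlast : w.getLast? = some d := by
      rw [hwdef]
      show (a :: b :: ((L ++ [c]) ++ [d])).getLast? = some d
      rw [show a :: b :: ((L ++ [c]) ++ [d]) = (a :: b :: (L ++ [c])) ++ [d] by simp]
      exact List.getLast?_concat
    by_cases had : a = d
    · -- semicycle
      exact hscf ⟨w, ⟨hklen, by rw [hhead, hlast, had], hcards, hnd⟩, hedges⟩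
    · -- chain of length 3 in a 2-hypertree
      have := hlen w ⟨hklen, by rw [hhead, hlast]; simp [had], hcards, hnd⟩ hedges
      rw [hwlen] at this
      omega
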